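/- Let s be a nonzero complex number with s⁸ + s⁴ + 1 ≠ 0, and set c = s² + s⁻². If complex numbers a₁, a₂ satisfy both (E1) s⁴ + s⁻⁴ = (a₁/4)(c + 1) + a₂(c − 1) and (E2) s·(s⁴ + s⁻⁴) + s⁻¹·(s² + s⁻²) = (a₂ − a₁/4)(s³ + s⁻³) + (a₁/2)·s³, then necessarily a₁ = 2(c − 2) and a₂ = (c + 2)/2. -/

import Mathlib

/-- Proposition 3.1 (uniqueness part): if `s ≠ 0`, `s⁸ + s⁴ + 1 ≠ 0`, and
`c = s² + s⁻²`, then any solution `(a₁, a₂)` of equations (E1) and (E2)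
must be `a₁ = 2(c − 2)`, `a₂ = (c + 2)/2`. -/
theorem coefficients_unique (s : ℂ) (hs : s ≠ 0)
    (hs8 : s ^ 8 + s ^ 4 + 1 ≠ 0)
    (c a₁ a₂ : ℂ) (hc : c = s ^ 2 + s⁻¹ ^ 2)
    (hE1 : s ^ 4 + s⁻¹ ^ 4 = a₁ / 4 * (c + 1) + a₂ * (c - 1))
    (hE2 : s * (s ^ 4 + s⁻¹ ^ 4) + s⁻¹ * (s ^ 2 + s⁻¹ ^ 2) =
      (a₂ - a₁ / 4) * (s ^ 3 + s⁻¹ ^ 3) + a₁ / 2 * s ^ 3) :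
    a₁ = 2 * (c - 2) ∧ a₂ = (c + 2) / 2 := by
  subst hc
  field_simp at hE1 hE2
  have hM : (4 : ℂ) * s ^ 5 * (s ^ 8 + s ^ 4 + 1) ≠ 0 :=
    mul_ne_zero (mul_ne_zero (by norm_num) (pow_ne_zero _ hs)) hs8
  have hM' : (8 : ℂ) * s ^ 5 * (s ^ 8 + s ^ 4 + 1) ≠ 0 :=
    mul_ne_zero (mul_ne_zero (by norm_num) (pow_ne_zero _ hs)) hs8
  have h1 : (a₁ * s ^ 2 - 2 * (s ^ 2 - 1) ^ 2) * (4 * s ^ 5 * (s ^ 8 + s ^ 4 + 1)) = 0 := by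
    linear_combination (-2 * s ^ 5 * (s ^ 4 - s ^ 2 + 1) * (s ^ 2 + 1)) * hE1 + (s ^ 7 * (s ^ 4 - s ^ 2 + 1)) * hE2
  have h2 : (2 * a₂ * s ^ 2 - (s ^ 2 + 1) ^ 2) * (8 * s ^ 5 * (s ^ 8 + s ^ 4 + 1)) = 0 := by
    linear_combination (2 * s ^ 5 * (s ^ 4 + s ^ 2 + 1) * (s ^ 2 - 1)) * hE1 + (-(s ^ 7 * (s ^ 4 + s ^ 2 + 1))) * hE2
  have h1' : a₁ * s ^ 2 - 2 * (s ^ 2 - 1) ^ 2 = 0 := (mul_eq_zero.1 h1).resolve_right hM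
  have h2' : 2 * a₂ * s ^ 2 - (s ^ 2 + 1) ^ 2 = 0 := (mul_eq_zero.1 h2).resolve_right hM'
  constructor
  · field_simp
    linear_combination h1'
  · field_simp
    linear_combination h2'
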